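/- With the prevailing reward $\Gamma(t) = \max_{0\le\theta\le t-1}\gamma(\theta)$, for every deterministic time $N$ with $0 \le N \le T-1$, $\mathcal{E}(\sum_{t=N+1}^{T} \beta^t (h(t) - \Gamma(t)) \mid \mathcal{F}_N) \le 0$ almost surely. -/

import Mathlib

open MeasureTheory Filter Classical Finset

variable {Ω : Type*} [MeasurableSpace Ω]

/-- An `(ℱ t)`-consistent coherent nonlinear expectation (Definition 2.2). -/
structure ConsistentCNE (μ : Measure Ω) (ℱ : ℕ → MeasurableSpace Ω)
    (E : ℕ → (Ω → ℝ) → (Ω → ℝ)) : Prop where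
  adapted : ∀ t X, Measurable[ℱ t] (E t X)
  mono : ∀ t (X Y : Ω → ℝ), Y ≤ᵐ[μ] X → E t Y ≤ᵐ[μ] E t X
  strictMono : ∀ t (X Y : Ω → ℝ), Y ≤ᵐ[μ] X → E t X =ᵐ[μ] E t Y → X =ᵐ[μ] Y
  transl : ∀ t (X c : Ω → ℝ), Measurable[ℱ t] c →
      E t (fun ω => X ω + c ω) =ᵐ[μ] fun ω => E t X ω + c ω
  normalized : ∀ t, E t (fun _ => 0) =ᵐ[μ] fun _ => 0
  subadd : ∀ t (X Y : Ω → ℝ),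
      E t (fun ω => X ω + Y ω) ≤ᵐ[μ] fun ω => E t X ω + E t Y ω
  posHom : ∀ t (X lam : Ω → ℝ), Measurable[ℱ t] lam → (∀ᵐ ω ∂μ, 0 ≤ lam ω) →
      E t (fun ω => lam ω * X ω) =ᵐ[μ] fun ω => lam ω * E t X ω
  lebesgue : ∀ t (Xn : ℕ → Ω → ℝ) (X : Ω → ℝ) (K : ℝ),
      (∀ n, ∀ᵐ ω ∂μ, |Xn n ω| ≤ K) →
      (∀ᵐ ω ∂μ, Tendsto (fun n => Xn n ω) atTop (nhds (X ω))) →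
      ∀ᵐ ω ∂μ, Tendsto (fun n => E t (Xn n) ω) atTop (nhds (E t X ω))
  tower : ∀ s t (X : Ω → ℝ), s ≤ t → E s X =ᵐ[μ] E s (E t X)

/-- `𝒯(s)`: the bounded positive `(ℱ (s+t))`-stopping times. -/
def stopTimes (ℱ : ℕ → MeasurableSpace Ω) (s : ℕ) : Set (Ω → ℕ) :=
  {τ | (∀ ω, 1 ≤ τ ω) ∧ (∃ B, ∀ ω, τ ω ≤ B) ∧
    ∀ n, MeasurableSet[ℱ (s + n)] {ω | τ ω = n}}

/-- The optimal-stopping value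
`V(τ, λ) = 𝓔(∑_{t=1}^{τ} β^t (h(s+t) - λ) | ℱ_s)`. -/
noncomputable def banditV (E : ℕ → (Ω → ℝ) → (Ω → ℝ)) (h : ℕ → Ω → ℝ) (β : ℝ)
    (s : ℕ) (τ : Ω → ℕ) (lam : Ω → ℝ) : Ω → ℝ :=
  E s (fun ω => ∑ t ∈ Finset.Icc 1 (τ ω), β ^ t * (h (s + t) ω - lam ω))

/-- The hitting time `σ(s, λ) = inf {θ ≥ 1 : γ(s + θ) > λ}` of the Gittins
index process above a level `λ < C` (Definition 4.1). -/
noncomputable def hitTime (γ : ℕ → Ω → ℝ) (s : ℕ) (lam : Ω → ℝ) : Ω → ℕ :=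
  fun ω => sInf {θ : ℕ | 1 ≤ θ ∧ lam ω < γ (s + θ) ω}

/-- The prevailing reward process `Γ(t) = max_{0 ≤ θ ≤ t-1} γ(θ)`
(Definition 4.3). -/
noncomputable def prevailing (γ : ℕ → Ω → ℝ) (t : ℕ) : Ω → ℝ :=
  fun ω => (Finset.Icc 0 (t - 1)).sup'
    (Finset.nonempty_Icc.mpr (Nat.zero_le _)) (fun θ => γ θ ω)

/-- The successive times `Ŝ_n` at which the Gittins index process `γ` strictly
exceeds its running maximum (Definition 4.2): `Ŝ_0 = 0`,
`Ŝ_{n+1} = Ŝ_n + σ_n` with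
`σ_n = inf {θ ≥ 1 : γ(Ŝ_n + θ) > γ(Ŝ_n)}` when `γ(Ŝ_n) < C`, else `σ_n = 0`. -/
noncomputable def Shat (γ : ℕ → Ω → ℝ) (C : ℝ) : ℕ → Ω → ℕ
  | 0, _ => 0
  | n + 1, ω =>
    Shat γ C n ω +
      (if γ (Shat γ C n ω) ω < C then
        sInf {θ : ℕ | 1 ≤ θ ∧ γ (Shat γ C n ω) ω < γ (Shat γ C n ω + θ) ω}
      else 0)


section RobustGittinsAux

variable {Ω : Type*} [MeasurableSpace Ω]

lemma sInf_hit_eq_iff {P : ℕ → Prop} {d : ℕ} (hd : 1 ≤ d) :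
    sInf {θ : ℕ | 1 ≤ θ ∧ P θ} = d ↔ P d ∧ ∀ θ, 1 ≤ θ → θ < d → ¬ P θ := by
  constructor
  · intro h
    have hne : {θ : ℕ | 1 ≤ θ ∧ P θ}.Nonempty := by
      by_contra hemp
      rw [Set.not_nonempty_iff_eq_empty] at hemp
      rw [hemp, Nat.sInf_empty] at h
      omega
    have hmem := Nat.sInf_mem hne
    rw [h] at hmem
    refine ⟨hmem.2, fun θ h1 hθ hP => ?_⟩
    exact Nat.notMem_of_lt_sInf (by rw [h]; exact hθ)
      (show θ ∈ {θ : ℕ | 1 ≤ θ ∧ P θ} from ⟨h1, hP⟩)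
  · rintro ⟨hPd, hmin⟩
    have hmem : d ∈ {θ : ℕ | 1 ≤ θ ∧ P θ} := ⟨hd, hPd⟩
    have h1 : sInf {θ : ℕ | 1 ≤ θ ∧ P θ} ≤ d := Nat.sInf_le hmem
    have h2 := Nat.sInf_mem ⟨d, hmem⟩
    rcases lt_or_eq_of_le h1 with h | h
    · exact absurd h2.2 (hmin _ h2.1 h)
    · exact h

lemma hit_event_meas {ℱ : ℕ → MeasurableSpace Ω} (hmono : Monotone ℱ)
    (f : ℕ → Ω → ℝ) (g : Ω → ℝ) (b : ℕ) (hg : Measurable[ℱ b] g)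
    (hf : ∀ θ, Measurable[ℱ (b + θ)] (f θ)) {d : ℕ} (hd : 1 ≤ d) :
    MeasurableSet[ℱ (b + d)] {ω | sInf {θ : ℕ | 1 ≤ θ ∧ g ω < f θ ω} = d} := by
  have hset : {ω | sInf {θ : ℕ | 1 ≤ θ ∧ g ω < f θ ω} = d}
      = {ω | g ω < f d ω} ∩ ⋂ θ : ℕ, {ω | 1 ≤ θ → θ < d → ¬ g ω < f θ ω} := by
    ext ω
    simp only [Set.mem_setOf_eq, Set.mem_inter_iff, Set.mem_iInter]
    exact sInf_hit_eq_iff hd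
  rw [hset]
  have hg' : Measurable[ℱ (b + d)] g := hg.mono (hmono (Nat.le_add_right b d)) le_rfl
  refine MeasurableSet.inter (measurableSet_lt hg' (hf d)) (MeasurableSet.iInter fun θ => ?_)
  by_cases h1 : 1 ≤ θ ∧ θ < d
  · have hs : {ω | 1 ≤ θ → θ < d → ¬ g ω < f θ ω} = {ω | g ω < f θ ω}ᶜ := by
      ext ω; simp [h1.1, h1.2]
    rw [hs]
    exact (measurableSet_lt hg' ((hf θ).mono (hmono (by omega)) le_rfl)).compl
  · have hs : {ω | 1 ≤ θ → θ < d → ¬ g ω < f θ ω} = Set.univ := by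
      ext ω
      simp only [Set.mem_setOf_eq, Set.mem_univ, iff_true]
      intro ha hb; exact absurd ⟨ha, hb⟩ h1
    rw [hs]; exact MeasurableSet.univ

/-- Every strict record time of `γ(·)(ω)` is reached by the sequence `Ŝ`. -/
lemma record_reached (γ : ℕ → Ω → ℝ) (C : ℝ) (T : ℕ)
    (hγBdd : ∀ t, t < T → ∀ ω, 0 ≤ γ t ω ∧ γ t ω < C)
    (hγC : ∀ t, T ≤ t → ∀ ω, γ t ω = C) (ω : Ω) :
    ∀ r, (∀ θ < r, γ θ ω < γ r ω) → ∃ m ≤ r, Shat γ C m ω = r := by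
  intro r
  induction r using Nat.strong_induction_on with
  | _ r IH =>
  intro hrec
  rcases Nat.eq_zero_or_pos r with hr0 | hrpos
  · exact ⟨0, by omega, by simp [hr0, Shat]⟩
  have hne : ((Finset.Icc 0 (r-1)).Nonempty) := Finset.nonempty_Icc.mpr (Nat.zero_le _)
  set Mx := (Finset.Icc 0 (r-1)).sup' hne (fun θ => γ θ ω) with hMx
  have hSne : {θ : ℕ | γ θ ω = Mx}.Nonempty := by
    obtain ⟨i, hi, hiq⟩ := Finset.exists_mem_eq_sup' hne (fun θ => γ θ ω)
    exact ⟨i, hiq.symm⟩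
  set r' := sInf {θ : ℕ | γ θ ω = Mx} with hr'
  have hr'mem : γ r' ω = Mx := Nat.sInf_mem hSne
  have hr'le : r' ≤ r - 1 := by
    obtain ⟨i, hi, hiq⟩ := Finset.exists_mem_eq_sup' hne (fun θ => γ θ ω)
    have h1 : r' ≤ i := Nat.sInf_le hiq.symm
    have h2 : i ≤ r - 1 := (Finset.mem_Icc.mp hi).2
    omega
  have hle_r' : ∀ s, s ≤ r - 1 → γ s ω ≤ γ r' ω := by
    intro s hs
    rw [hr'mem]
    exact Finset.le_sup' (fun θ => γ θ ω) (Finset.mem_Icc.mpr ⟨Nat.zero_le _, hs⟩)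
  have hrec' : ∀ θ < r', γ θ ω < γ r' ω := by
    intro θ hθ
    have h1 : γ θ ω ≤ γ r' ω := hle_r' θ (by omega)
    have h2 : γ θ ω ≠ Mx := fun hq =>
      Nat.notMem_of_lt_sInf hθ (show θ ∈ {θ : ℕ | γ θ ω = Mx} from hq)
    exact lt_of_le_of_ne h1 (fun hq => h2 (hq.trans hr'mem))
  obtain ⟨m, hm, hSm⟩ := IH r' (by omega) hrec'
  have hγr_le : γ r ω ≤ C := by
    rcases lt_or_ge r T with h | h
    · exact (hγBdd r h ω).2.le
    · exact (hγC r h ω).le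
  have hlt : γ r' ω < γ r ω := hrec r' (by omega)
  have hltC : γ r' ω < C := lt_of_lt_of_le hlt hγr_le
  refine ⟨m + 1, by omega, ?_⟩
  show Shat γ C m ω + _ = r
  rw [hSm, if_pos hltC]
  have hs : sInf {θ : ℕ | 1 ≤ θ ∧ γ r' ω < γ (r' + θ) ω} = r - r' := by
    rw [sInf_hit_eq_iff (by omega)]
    constructor
    · have h3 : r' + (r - r') = r := by omega
      rw [h3]; exact hlt
    · intro θ h1 hθ hP
      have h4 : γ (r' + θ) ω ≤ γ r' ω := hle_r' _ (by omega)
      exact absurd hP (not_lt.mpr h4)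
  rw [hs]; omega

/-- `Ŝ_m` is a stopping time. -/
lemma Shat_meas {ℱ : ℕ → MeasurableSpace Ω} (hmono : Monotone ℱ)
    (γ : ℕ → Ω → ℝ) (C : ℝ) (T : ℕ)
    (hγAdapted : ∀ t, Measurable[ℱ t] (γ t))
    (hγC : ∀ t, T ≤ t → ∀ ω, γ t ω = C) :
    ∀ m r, MeasurableSet[ℱ r] {ω | Shat γ C m ω = r} := by
  have step_pos : ∀ (p : ℕ) (ω : Ω), γ p ω < C →
      1 ≤ sInf {θ : ℕ | 1 ≤ θ ∧ γ p ω < γ (p + θ) ω} := by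
    intro p ω hpC
    have hpT : p < T := by
      by_contra hpT
      rw [hγC p (by omega) ω] at hpC
      exact lt_irrefl _ hpC
    have hmem : (T - p) ∈ {θ : ℕ | 1 ≤ θ ∧ γ p ω < γ (p + θ) ω} := by
      refine ⟨by omega, ?_⟩
      have h1 : p + (T - p) = T := by omega
      rw [h1, hγC T le_rfl ω]; exact hpC
    exact (Nat.sInf_mem ⟨_, hmem⟩).1
  intro m
  induction m with
  | zero =>
    intro r
    rcases Nat.eq_zero_or_pos r with h | h
    · have hs : {ω : Ω | Shat γ C 0 ω = r} = Set.univ := by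
        ext ω; simp [Shat, h.symm]
      rw [hs]; exact MeasurableSet.univ
    · have hs : {ω : Ω | Shat γ C 0 ω = r} = ∅ := by
        ext ω; simp only [Set.mem_setOf_eq, Set.mem_empty_iff_false, iff_false]
        show ¬ (0 = r); omega
      rw [hs]; exact @MeasurableSet.empty Ω (ℱ r)
  | succ m IHm =>
    intro r
    have hshow : ∀ ω : Ω, Shat γ C (m+1) ω = Shat γ C m ω +
        (if γ (Shat γ C m ω) ω < C then
          sInf {θ : ℕ | 1 ≤ θ ∧ γ (Shat γ C m ω) ω < γ (Shat γ C m ω + θ) ω}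
        else 0) := fun ω => rfl
    have hdecomp : {ω | Shat γ C (m+1) ω = r}
        = ⋃ p ∈ Finset.range (r+1), ({ω | Shat γ C m ω = p} ∩
            (if p = r then {ω | ¬ γ p ω < C}
             else {ω | γ p ω < C} ∩
               {ω | sInf {θ : ℕ | 1 ≤ θ ∧ γ p ω < γ (p + θ) ω} = r - p})) := by
      ext ω
      simp only [Set.mem_setOf_eq, Set.mem_iUnion, Finset.mem_range, Set.mem_inter_iff,
        exists_prop]
      constructor
      · intro hS
        rw [hshow ω] at hS
        refine ⟨Shat γ C m ω, by omega, rfl, ?_⟩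
        by_cases hC : γ (Shat γ C m ω) ω < C
        · rw [if_pos hC] at hS
          have hstep := step_pos _ ω hC
          have hne' : Shat γ C m ω ≠ r := by omega
          rw [if_neg hne']
          refine ⟨hC, ?_⟩
          show sInf {θ : ℕ | 1 ≤ θ ∧ γ (Shat γ C m ω) ω < γ (Shat γ C m ω + θ) ω}
              = r - Shat γ C m ω
          omega
        · rw [if_neg hC] at hS
          have heq : Shat γ C m ω = r := by omega
          rw [if_pos heq]; exact hC
      · rintro ⟨p, hpr, hSp, hcond⟩
        rw [hshow ω, hSp]
        by_cases hpr' : p = r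
        · rw [if_pos hpr'] at hcond
          subst hpr'
          have hcond' : ¬ γ p ω < C := hcond
          rw [if_neg hcond']
          omega
        · rw [if_neg hpr'] at hcond
          have h1 : γ p ω < C := hcond.1
          have h2 : sInf {θ : ℕ | 1 ≤ θ ∧ γ p ω < γ (p + θ) ω} = r - p := hcond.2
          rw [if_pos h1, h2]
          omega
    rw [hdecomp]
    apply MeasurableSet.biUnion (Finset.range (r+1) : Finset ℕ).countable_toSet
    intro p hp
    simp only [Finset.mem_coe, Finset.mem_range] at hp
    have hpmeas : MeasurableSet[ℱ r] {ω | Shat γ C m ω = p} :=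
      hmono (by omega : p ≤ r) _ (IHm p)
    refine hpmeas.inter ?_
    by_cases hpr : p = r
    · rw [if_pos hpr]
      have hs : {ω : Ω | ¬ γ p ω < C} = {ω | γ p ω < C}ᶜ := rfl
      rw [hs]
      exact (measurableSet_lt ((hγAdapted p).mono (hmono (by omega)) le_rfl)
        measurable_const).compl
    · rw [if_neg hpr]
      refine MeasurableSet.inter
        (measurableSet_lt ((hγAdapted p).mono (hmono (by omega)) le_rfl)
          measurable_const) ?_
      have h2 := hit_event_meas hmono (fun θ => γ (p + θ)) (γ p) p (hγAdapted p)
        (fun θ => hγAdapted (p + θ)) (show 1 ≤ r - p by omega)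
      have h3 : p + (r - p) = r := by omega
      rw [h3] at h2
      exact h2

namespace ConsistentCNE

variable {μ : Measure Ω} {ℱ : ℕ → MeasurableSpace Ω} {E : ℕ → (Ω → ℝ) → (Ω → ℝ)}

lemma congr' (hE : ConsistentCNE μ ℱ E) {t : ℕ} {f g : Ω → ℝ} (h : f =ᵐ[μ] g) :
    E t f =ᵐ[μ] E t g :=
  (hE.mono t g f h.le).antisymm (hE.mono t f g h.symm.le)

lemma le_zero (hE : ConsistentCNE μ ℱ E) {t : ℕ} {f : Ω → ℝ}
    (h : f ≤ᵐ[μ] 0) : E t f ≤ᵐ[μ] 0 :=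
  (hE.mono t _ f h).trans (hE.normalized t).le

lemma eq_zero (hE : ConsistentCNE μ ℱ E) {t : ℕ} {f : Ω → ℝ}
    (h : f =ᵐ[μ] 0) : E t f =ᵐ[μ] 0 :=
  (hE.congr' h).trans (hE.normalized t)

lemma tower_le_zero (hE : ConsistentCNE μ ℱ E) {s t : ℕ} {f : Ω → ℝ} (hst : s ≤ t)
    (h : E t f ≤ᵐ[μ] 0) : E s f ≤ᵐ[μ] 0 :=
  (hE.tower s t f hst).le.trans (hE.le_zero h)

lemma sum_le (hE : ConsistentCNE μ ℱ E) (t : ℕ) {ι : Type*} (s : Finset ι)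
    (f : ι → Ω → ℝ) :
    E t (fun ω => ∑ i ∈ s, f i ω) ≤ᵐ[μ] fun ω => ∑ i ∈ s, E t (f i) ω := by
  classical
  induction s using Finset.induction with
  | empty =>
    simp only [Finset.sum_empty]
    exact (hE.normalized t).le
  | @insert a s ha ih =>
    simp only [Finset.sum_insert ha]
    refine (hE.subadd t (f a) (fun ω => ∑ i ∈ s, f i ω)).trans ?_
    filter_upwards [ih] with ω hω
    exact add_le_add le_rfl hω

lemma sum_le_zero_ae {ι : Type*} (s : Finset ι) (g : ι → Ω → ℝ)
    (h : ∀ i ∈ s, g i ≤ᵐ[μ] 0) : (fun ω => ∑ i ∈ s, g i ω) ≤ᵐ[μ] 0 := by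
  have h' : ∀ᵐ ω ∂μ, ∀ i ∈ s, g i ω ≤ 0 := by
    rw [Filter.eventually_all_finset]
    intro i hi
    filter_upwards [h i hi] with ω hω using hω
  filter_upwards [h'] with ω hω
  exact Finset.sum_nonpos hω

end ConsistentCNE

end RobustGittinsAux

/-- **Theorem 4.3.**  With the prevailing reward `Γ(t) = max_{0≤θ≤t-1} γ(θ)`,
for every deterministic time `N` with `0 ≤ N ≤ T-1`,
`𝓔(∑_{t=N+1}^{T} β^t (h(t) - Γ(t)) | ℱ_N) ≤ 0` a.s. -/
theorem stmt9 (μ : Measure Ω) [IsProbabilityMeasure μ]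
    (ℱ : ℕ → MeasurableSpace Ω) (hℱmono : Monotone ℱ)
    (hℱle : ∀ t, ℱ t ≤ ‹MeasurableSpace Ω›)
    (E : ℕ → (Ω → ℝ) → (Ω → ℝ)) (hE : ConsistentCNE μ ℱ E)
    (T : ℕ) (C : ℝ) (hC : 0 < C) (β : ℝ) (hβ : β ∈ Set.Ioo (0 : ℝ) 1)
    (h : ℕ → Ω → ℝ) (hhAdapted : ∀ t, Measurable[ℱ t] (h t))
    (hhBdd : ∀ t, t ≤ T → ∀ ω, 0 ≤ h t ω ∧ h t ω < C)
    (hhC : ∀ t, T < t → ∀ ω, h t ω = C)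
    -- the robust Gittins index process
    (γ : ℕ → Ω → ℝ) (hγAdapted : ∀ t, Measurable[ℱ t] (γ t))
    (hγBdd : ∀ t, t < T → ∀ ω, 0 ≤ γ t ω ∧ γ t ω < C)
    (hγC : ∀ t, T ≤ t → ∀ ω, γ t ω = C)
    -- known (Proposition 4.1): the fair-game property at the times `Ŝ_n`
    (hfair : ∀ n : ℕ,
      (fun ω => E (Shat γ C n ω)
        (fun ω' => ∑ t ∈ Finset.Icc (Shat γ C n ω' + 1) T,
          β ^ t * (h t ω' - prevailing γ t ω')) ω) =ᵐ[μ] 0)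
    -- known (Lemma A.8): residual nonpositivity up to the hitting time:
    -- for `τ ∈ 𝒯(s)` with `τ ≤ σ(s,λ)`,
    -- `𝓔(∑_{t=τ+1}^{σ(s,λ)} β^t (h(s+t) - λ) | ℱ_{s+τ}) ≤ 0` a.s.
    (hresid : ∀ (s : ℕ) (lam : Ω → ℝ), Measurable[ℱ s] lam →
      (∀ ω, 0 ≤ lam ω ∧ lam ω < C) →
      ∀ τ ∈ stopTimes ℱ s, (∀ ω, τ ω ≤ hitTime γ s lam ω) →
      (fun ω => E (s + τ ω)
        (fun ω' => ∑ t ∈ Finset.Icc (τ ω' + 1) (hitTime γ s lam ω'),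
          β ^ t * (h (s + t) ω' - lam ω')) ω) ≤ᵐ[μ] 0) :
    ∀ N : ℕ, N ≤ T - 1 →
      E N (fun ω => ∑ t ∈ Finset.Icc (N + 1) T,
        β ^ t * (h t ω - prevailing γ t ω)) ≤ᵐ[μ] 0 := by
  classical
  intro N hN
  by_cases hNT : N < T
  case neg =>
    have hIcc : Finset.Icc (N+1) T = ∅ := Finset.Icc_eq_empty (by omega)
    have hfn : (fun ω => ∑ t ∈ Finset.Icc (N+1) T, β ^ t * (h t ω - prevailing γ t ω))
        = fun _ => (0:ℝ) := by
      funext ω; rw [hIcc, Finset.sum_empty]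
    rw [hfn]
    exact (hE.normalized N).le
  case pos =>
  have hβ0 : (0:ℝ) ≤ β := hβ.1.le
  -- the prevailing reward level `λ = Γ(N+1)`
  set lam : Ω → ℝ := prevailing γ (N+1) with hlamdef
  have hneN : (Finset.Icc 0 N).Nonempty := Finset.nonempty_Icc.mpr (Nat.zero_le _)
  have hlam_eq : ∀ ω, lam ω = (Finset.Icc 0 N).sup' hneN (fun θ => γ θ ω) := by
    intro ω
    simp only [hlamdef, prevailing, Nat.add_sub_cancel]
  have hlam_ub : ∀ ω θ, θ ≤ N → γ θ ω ≤ lam ω := by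
    intro ω θ hθ
    rw [hlam_eq]
    exact Finset.le_sup' (fun θ => γ θ ω) (Finset.mem_Icc.mpr ⟨Nat.zero_le _, hθ⟩)
  have hlam_attain : ∀ ω, ∃ s ≤ N, γ s ω = lam ω := by
    intro ω
    obtain ⟨i, hi, hiq⟩ := Finset.exists_mem_eq_sup' hneN (fun θ => γ θ ω)
    exact ⟨i, (Finset.mem_Icc.mp hi).2, by rw [hlam_eq]; exact hiq.symm⟩
  have hlam_bdd : ∀ ω, 0 ≤ lam ω ∧ lam ω < C := by
    intro ω
    constructor
    · exact le_trans (hγBdd 0 (by omega) ω).1 (hlam_ub ω 0 (by omega))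
    · obtain ⟨s, hs, hq⟩ := hlam_attain ω
      rw [← hq]
      exact (hγBdd s (by omega) ω).2
  have hlam_meas : Measurable[ℱ N] lam := by
    have h2 : lam = (Finset.Icc 0 N).sup' hneN (fun θ => γ θ) := by
      funext ω
      rw [hlam_eq, Finset.sup'_apply]
    rw [h2]
    exact @Finset.measurable_sup' ℝ _ Ω (ℱ N) _ _ ℕ (Finset.Icc 0 N) hneN (fun θ => γ θ)
      (fun i hi => (hγAdapted i).mono (hℱmono (Finset.mem_Icc.mp hi).2) le_rfl)
  -- the hitting time of the prevailing level
  set σ : Ω → ℕ := fun ω => sInf {θ : ℕ | 1 ≤ θ ∧ lam ω < γ (N + θ) ω} with hσdef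
  have hσmem : ∀ ω, (T - N) ∈ {θ : ℕ | 1 ≤ θ ∧ lam ω < γ (N + θ) ω} := by
    intro ω
    refine ⟨by omega, ?_⟩
    have h1 : N + (T - N) = T := by omega
    rw [h1, hγC T le_rfl ω]
    exact (hlam_bdd ω).2
  have hσ_in : ∀ ω, 1 ≤ σ ω ∧ lam ω < γ (N + σ ω) ω := fun ω => Nat.sInf_mem ⟨_, hσmem ω⟩
  have hσ1 : ∀ ω, 1 ≤ σ ω := fun ω => (hσ_in ω).1
  have hσlt : ∀ ω, lam ω < γ (N + σ ω) ω := fun ω => (hσ_in ω).2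
  have hσM : ∀ ω, σ ω ≤ T - N := fun ω => Nat.sInf_le (hσmem ω)
  have hσmin : ∀ ω θ, 1 ≤ θ → θ < σ ω → γ (N + θ) ω ≤ lam ω := by
    intro ω θ h1 h2
    by_contra hc
    exact Nat.notMem_of_lt_sInf h2 (show θ ∈ {θ : ℕ | 1 ≤ θ ∧ lam ω < γ (N + θ) ω}
      from ⟨h1, not_le.mp hc⟩)
  -- prevailing is constant on (N, N + σ]
  have hprev : ∀ ω t, N + 1 ≤ t → t ≤ N + σ ω → prevailing γ t ω = lam ω := by
    intro ω t h1 h2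
    have hnet : (Finset.Icc 0 (t-1)).Nonempty := Finset.nonempty_Icc.mpr (Nat.zero_le _)
    have hpe : prevailing γ t ω = (Finset.Icc 0 (t-1)).sup' hnet (fun θ => γ θ ω) := rfl
    rw [hpe]
    apply le_antisymm
    · apply Finset.sup'_le
      intro θ hθ
      have hθ' : θ ≤ t - 1 := (Finset.mem_Icc.mp hθ).2
      rcases le_or_gt θ N with hc | hc
      · exact hlam_ub ω θ hc
      · have he : θ = N + (θ - N) := by omega
        rw [he]
        exact hσmin ω (θ - N) (by omega) (by omega)
    · rw [hlam_eq]
      exact Finset.sup'_mono (fun θ => γ θ ω)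
        (Finset.Icc_subset_Icc le_rfl (by omega)) hneN
  -- the main functions
  set Y : Ω → ℝ := fun ω => ∑ t ∈ Finset.Icc (N+1) T, β ^ t * (h t ω - prevailing γ t ω)
    with hYdef
  set Y1 : Ω → ℝ := fun ω => ∑ t ∈ Finset.Icc (N+1) (N + σ ω), β ^ t * (h t ω - lam ω)
    with hY1def
  set Y2 : Ω → ℝ := fun ω => ∑ t ∈ Finset.Icc (N + σ ω + 1) T,
      β ^ t * (h t ω - prevailing γ t ω) with hY2def
  have hY12 : ∀ ω, Y ω = Y1 ω + Y2 ω := by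
    intro ω
    have hNσT : N + σ ω ≤ T := by have := hσM ω; omega
    simp only [hYdef, hY1def, hY2def]
    rw [Finset.Icc_add_one_left_eq_Ioc, Finset.Icc_add_one_left_eq_Ioc, Finset.Icc_add_one_left_eq_Ioc]
    rw [← Finset.sum_Ioc_consecutive (fun t => β ^ t * (h t ω - prevailing γ t ω))
      (show N ≤ N + σ ω by omega) hNσT]
    congr 1
    apply Finset.sum_congr rfl
    intro t ht
    have ht' := Finset.mem_Ioc.mp ht
    rw [hprev ω t (by omega) ht'.2]
  -- indicator functions
  set ind : Set Ω → Ω → ℝ := fun A ω => if ω ∈ A then 1 else 0 with hinddef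
  have hind_meas : ∀ (t : ℕ) (A : Set Ω), MeasurableSet[ℱ t] A → Measurable[ℱ t] (ind A) :=
    fun t A hA => Measurable.ite hA measurable_const measurable_const
  have hind_nonneg : ∀ A ω, 0 ≤ ind A ω := by
    intro A ω; simp only [hinddef]; split <;> norm_num
  have hind_one : ∀ A ω, ω ∈ A → ind A ω = 1 := fun A ω hω => if_pos hω
  have hind_zero : ∀ A ω, ω ∉ A → ind A ω = 0 := fun A ω hω => if_neg hω
  -- the events
  set Bset : ℕ → Set Ω := fun s => {ω | γ s ω = lam ω ∧ ∀ θ < s, γ θ ω ≠ lam ω} with hBsetdef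
  set MN : ℕ → Set Ω := fun m =>
      {ω | ω ∈ Bset N ∧ Shat γ C m ω = N ∧ ∀ m' < m, Shat γ C m' ω ≠ N} with hMNdef
  set Dset : ℕ × ℕ → Set Ω := fun q =>
      {ω | ω ∉ Bset N ∧ σ ω = q.1 ∧ Shat γ C q.2 ω = N + q.1 ∧
        ∀ m' < q.2, Shat γ C m' ω ≠ N + q.1} with hDdef
  have hBset_mem : ∀ s ω, ω ∈ Bset s ↔ (γ s ω = lam ω ∧ ∀ θ < s, γ θ ω ≠ lam ω) :=
    fun s ω => Iff.rfl
  have hMN_mem : ∀ m ω, ω ∈ MN m ↔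
      (ω ∈ Bset N ∧ Shat γ C m ω = N ∧ ∀ m' < m, Shat γ C m' ω ≠ N) := fun m ω => Iff.rfl
  have hD_mem : ∀ q ω, ω ∈ Dset q ↔
      (ω ∉ Bset N ∧ σ ω = q.1 ∧ Shat γ C q.2 ω = N + q.1 ∧
        ∀ m' < q.2, Shat γ C m' ω ≠ N + q.1) := fun q ω => Iff.rfl
  -- measurability of the events
  have hShat_meas := Shat_meas hℱmono γ C T hγAdapted hγC
  have hmin_meas : ∀ (r mtop : ℕ), MeasurableSet[ℱ r] {ω | ∀ m' < mtop, Shat γ C m' ω ≠ r} := by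
    intro r mtop
    have hs : {ω | ∀ m' < mtop, Shat γ C m' ω ≠ r}
        = ⋂ m' : ℕ, {ω | m' < mtop → Shat γ C m' ω ≠ r} := by
      ext ω; simp only [Set.mem_setOf_eq, Set.mem_iInter]
    rw [hs]
    refine MeasurableSet.iInter fun m' => ?_
    by_cases hm' : m' < mtop
    · have hs2 : {ω | m' < mtop → Shat γ C m' ω ≠ r} = {ω | Shat γ C m' ω = r}ᶜ := by
        ext ω; simp [hm']
      rw [hs2]
      exact (hShat_meas m' r).compl
    · have hs2 : {ω | m' < mtop → Shat γ C m' ω ≠ r} = Set.univ := by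
        ext ω; simp [hm']
      rw [hs2]
      exact MeasurableSet.univ
  have hBset_meas : ∀ s, s ≤ N → MeasurableSet[ℱ N] (Bset s) := by
    intro s hsle
    have hγmeas : ∀ θ, θ ≤ N → Measurable[ℱ N] (γ θ) :=
      fun θ hθ => (hγAdapted θ).mono (hℱmono hθ) le_rfl
    have hs : Bset s = {ω | γ s ω = lam ω} ∩ ⋂ θ : ℕ, {ω | θ < s → γ θ ω ≠ lam ω} := by
      ext ω
      simp only [hBset_mem, Set.mem_inter_iff, Set.mem_setOf_eq, Set.mem_iInter]
    rw [hs]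
    refine MeasurableSet.inter (measurableSet_eq_fun (hγmeas s hsle) hlam_meas)
      (MeasurableSet.iInter fun θ => ?_)
    by_cases hθ : θ < s
    · have hs2 : {ω | θ < s → γ θ ω ≠ lam ω} = {ω | γ θ ω = lam ω}ᶜ := by
        ext ω; simp [hθ]
      rw [hs2]
      exact (measurableSet_eq_fun (hγmeas θ (by omega)) hlam_meas).compl
    · have hs2 : {ω | θ < s → γ θ ω ≠ lam ω} = Set.univ := by
        ext ω; simp [hθ]
      rw [hs2]
      exact MeasurableSet.univ
  have hσ_meas : ∀ j, 1 ≤ j → MeasurableSet[ℱ (N + j)] {ω | σ ω = j} := by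
    intro j hj
    have hs : {ω | σ ω = j}
        = {ω | sInf {θ : ℕ | 1 ≤ θ ∧ lam ω < γ (N + θ) ω} = j} := rfl
    rw [hs]
    exact hit_event_meas hℱmono (fun θ => γ (N + θ)) lam N hlam_meas
      (fun θ => hγAdapted (N + θ)) hj
  have hMN_meas : ∀ m, MeasurableSet[ℱ N] (MN m) := by
    intro m
    have hs : MN m = Bset N ∩ ({ω | Shat γ C m ω = N} ∩ {ω | ∀ m' < m, Shat γ C m' ω ≠ N}) := by
      ext ω
      simp only [hMN_mem, Set.mem_inter_iff, Set.mem_setOf_eq]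
    rw [hs]
    exact (hBset_meas N le_rfl).inter ((hShat_meas m N).inter (hmin_meas N m))
  have hD_meas : ∀ j m, 1 ≤ j → MeasurableSet[ℱ (N + j)] (Dset (j, m)) := by
    intro j m hj
    have hs : Dset (j, m) = (Bset N)ᶜ ∩ ({ω | σ ω = j} ∩
        ({ω | Shat γ C m ω = N + j} ∩ {ω | ∀ m' < m, Shat γ C m' ω ≠ N + j})) := by
      ext ω
      simp only [hD_mem, Set.mem_inter_iff, Set.mem_setOf_eq, Set.mem_compl_iff]
    rw [hs]
    refine MeasurableSet.inter ?_ (MeasurableSet.inter (hσ_meas j hj)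
      (MeasurableSet.inter (hShat_meas m (N + j)) (hmin_meas (N + j) m)))
    exact hℱmono (Nat.le_add_right N j) _ (hBset_meas N le_rfl).compl
  -- covering and disjointness of the `Bset`s
  have hcover : ∀ ω, ∃ s ≤ N, ω ∈ Bset s := by
    intro ω
    obtain ⟨s1, hs1, hq1⟩ := hlam_attain ω
    have hSne : {θ : ℕ | γ θ ω = lam ω}.Nonempty := ⟨s1, hq1⟩
    refine ⟨sInf {θ : ℕ | γ θ ω = lam ω}, le_trans (Nat.sInf_le hq1) hs1, ?_⟩
    rw [hBset_mem]
    exact ⟨Nat.sInf_mem hSne, fun θ hθ hc => Nat.notMem_of_lt_sInf hθ hc⟩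
  have huniq : ∀ ω s s', ω ∈ Bset s → ω ∈ Bset s' → s = s' := by
    intro ω s s' h1 h2
    rw [hBset_mem] at h1 h2
    by_contra hne
    rcases lt_or_gt_of_ne hne with hlt | hlt
    · exact h2.2 s hlt h1.1
    · exact h1.2 s' hlt h2.1
  -- Piece A : conditional value of the running part on `Bset s`, `s < N`
  have pieceA : ∀ s ∈ Finset.range N,
      E N (fun ω => ind (Bset s) ω * Y1 ω) ≤ᵐ[μ] 0 := by
    intro s hsmem
    have hsN : s < N := Finset.mem_range.mp hsmem
    have hsT : s < T := by omega
    have hγsC : ∀ ω, 0 ≤ γ s ω ∧ γ s ω < C := fun ω => hγBdd s hsT ω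
    have hht_in : ∀ ω, 1 ≤ hitTime γ s (γ s) ω ∧
        γ s ω < γ (s + hitTime γ s (γ s) ω) ω := by
      intro ω
      have hmem : (T - s) ∈ {θ : ℕ | 1 ≤ θ ∧ γ s ω < γ (s + θ) ω} := by
        refine ⟨by omega, ?_⟩
        have h1 : s + (T - s) = T := by omega
        rw [h1, hγC T le_rfl ω]
        exact (hγsC ω).2
      exact Nat.sInf_mem ⟨_, hmem⟩
    set τ : Ω → ℕ := fun ω => min (N - s) (hitTime γ s (γ s) ω) with hτdef
    have hτ1 : ∀ ω, 1 ≤ τ ω := fun ω => le_min (by omega) (hht_in ω).1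
    have hτB : ∀ ω, τ ω ≤ N - s := fun ω => min_le_left _ _
    have hτht : ∀ ω, τ ω ≤ hitTime γ s (γ s) ω := fun ω => min_le_right _ _
    have hht_event : ∀ n, 1 ≤ n → MeasurableSet[ℱ (s + n)] {ω | hitTime γ s (γ s) ω = n} := by
      intro n hn
      have hs2 : {ω | hitTime γ s (γ s) ω = n}
          = {ω | sInf {θ : ℕ | 1 ≤ θ ∧ γ s ω < γ (s + θ) ω} = n} := rfl
      rw [hs2]
      exact hit_event_meas hℱmono (fun θ => γ (s + θ)) (γ s) s (hγAdapted s)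
        (fun θ => hγAdapted (s + θ)) hn
    have hτmeas : ∀ n, MeasurableSet[ℱ (s + n)] {ω | τ ω = n} := by
      intro n
      rcases lt_trichotomy n (N - s) with hn | hn | hn
      · have hs1 : {ω | τ ω = n} = {ω | hitTime γ s (γ s) ω = n} := by
          ext ω
          simp only [hτdef, Set.mem_setOf_eq]
          omega
        rw [hs1]
        rcases Nat.eq_zero_or_pos n with h0 | h0
        · have hs2 : {ω | hitTime γ s (γ s) ω = n} = ∅ := by
            ext ω
            simp only [Set.mem_setOf_eq, Set.mem_empty_iff_false, iff_false]
            have := (hht_in ω).1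
            omega
          rw [hs2]
          exact @MeasurableSet.empty Ω (ℱ (s + n))
        · exact hht_event n h0
      · have hhalt : ∀ ω : Ω, τ ω = n ↔ ¬ hitTime γ s (γ s) ω < N - s := by
          intro ω
          simp only [hτdef]
          omega
        have hs1 : {ω | τ ω = n}
            = (⋃ k ∈ Finset.range (N - s), {ω | hitTime γ s (γ s) ω = k})ᶜ := by
          ext ω
          rw [Set.mem_setOf_eq, hhalt ω, Set.mem_compl_iff, Set.mem_iUnion₂]
          constructor
          · intro hnot hc
            obtain ⟨k, hk, hke⟩ := hc
            rw [Set.mem_setOf_eq] at hke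
            rw [Finset.mem_range] at hk
            omega
          · intro hall hc
            exact hall ⟨hitTime γ s (γ s) ω, Finset.mem_range.mpr hc, rfl⟩
        rw [hs1]
        refine MeasurableSet.compl ?_
        apply MeasurableSet.biUnion (Finset.range (N - s) : Finset ℕ).countable_toSet
        intro k hk
        simp only [Finset.mem_coe, Finset.mem_range] at hk
        rcases Nat.eq_zero_or_pos k with h0 | h0
        · have hs2 : {ω | hitTime γ s (γ s) ω = k} = ∅ := by
            ext ω
            simp only [Set.mem_setOf_eq, Set.mem_empty_iff_false, iff_false]
            have := (hht_in ω).1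
            omega
          rw [hs2]
          exact @MeasurableSet.empty Ω (ℱ (s + n))
        · exact hℱmono (by omega : s + k ≤ s + n) _ (hht_event k h0)
      · have hs1 : {ω | τ ω = n} = ∅ := by
          ext ω
          simp only [hτdef, Set.mem_setOf_eq, Set.mem_empty_iff_false, iff_false]
          have := hτB ω
          simp only [hτdef] at this
          omega
        rw [hs1]
        exact @MeasurableSet.empty Ω (ℱ (s + n))
    have hres := hresid s (γ s) (hγAdapted s) hγsC τ
      ⟨hτ1, ⟨N - s, hτB⟩, hτmeas⟩ hτht
    -- on `Bset s` the hitting time from `s` is `(N-s) + σ`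
    have hhtB : ∀ ω, ω ∈ Bset s → hitTime γ s (γ s) ω = (N - s) + σ ω := by
      intro ω hmem
      rw [hBset_mem] at hmem
      obtain ⟨hγs, -⟩ := hmem
      show sInf {θ : ℕ | 1 ≤ θ ∧ γ s ω < γ (s + θ) ω} = (N - s) + σ ω
      rw [sInf_hit_eq_iff (by have := hσ1 ω; omega)]
      constructor
      · have h1 : s + ((N - s) + σ ω) = N + σ ω := by omega
        rw [h1, hγs]
        exact hσlt ω
      · intro θ h1 h2 hc
        rcases le_or_gt θ (N - s) with h3 | h3
        · have h4 : s + θ ≤ N := by omega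
          have h5 := hlam_ub ω (s + θ) h4
          rw [hγs] at hc
          linarith
        · have h4 : s + θ = N + (θ - (N - s)) := by omega
          rw [h4, hγs] at hc
          have h5 := hσmin ω (θ - (N - s)) (by omega) (by omega)
          linarith
    have hτBs : ∀ ω, ω ∈ Bset s → τ ω = N - s := by
      intro ω hmem
      have := hhtB ω hmem
      simp only [hτdef]
      omega
    set inner : Ω → ℝ := fun ω => ∑ t ∈ Finset.Icc (τ ω + 1) (hitTime γ s (γ s) ω),
        β ^ t * (h (s + t) ω - γ s ω) with hinnerdef
    -- pointwise identity
    have hpt : ∀ ω, ind (Bset s) ω * Y1 ω = (β ^ s * ind (Bset s) ω) * inner ω := by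
      intro ω
      by_cases hmem : ω ∈ Bset s
      · have hγs : γ s ω = lam ω := ((hBset_mem s ω).mp hmem).1
        rw [hind_one _ _ hmem, one_mul, mul_one]
        simp only [hinnerdef, hY1def]
        rw [hτBs ω hmem, hhtB ω hmem]
        have hIcc1 : Finset.Icc (N - s + 1) (N - s + σ ω)
            = Finset.map (addLeftEmbedding (N - s)) (Finset.Icc 1 (σ ω)) := by
          rw [Finset.map_add_left_Icc]
        have hIcc2 : Finset.Icc (N + 1) (N + σ ω)
            = Finset.map (addLeftEmbedding N) (Finset.Icc 1 (σ ω)) := by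
          rw [Finset.map_add_left_Icc]
        rw [hIcc1, hIcc2, Finset.sum_map, Finset.sum_map, Finset.mul_sum]
        apply Finset.sum_congr rfl
        intro u hu
        simp only [addLeftEmbedding_apply]
        have e1 : s + (N - s + u) = N + u := by omega
        rw [e1, hγs, ← mul_assoc, ← pow_add]
        have e2 : s + (N - s + u) = N + u := by omega
        rw [e2]
      · rw [hind_zero _ _ hmem]
        ring
    have hpt' : (fun ω => ind (Bset s) ω * Y1 ω)
        = fun ω => (β ^ s * ind (Bset s) ω) * inner ω := funext hpt
    rw [hpt']
    have hEeq := hE.posHom N inner (fun ω => β ^ s * ind (Bset s) ω)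
      (measurable_const.mul (hind_meas N _ (hBset_meas s (by omega))))
      (Filter.Eventually.of_forall fun ω => mul_nonneg (pow_nonneg hβ0 s) (hind_nonneg _ ω))
    refine hEeq.le.trans ?_
    filter_upwards [hres] with ω hω
    simp only [Pi.zero_apply] at hω ⊢
    by_cases hmem : ω ∈ Bset s
    · have hsτ : s + τ ω = N := by
        have := hτBs ω hmem
        omega
      rw [hsτ] at hω
      rw [hind_one _ _ hmem, mul_one]
      have h1 : (0:ℝ) ≤ β ^ s := pow_nonneg hβ0 s
      exact mul_nonpos_of_nonneg_of_nonpos h1 hω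
    · rw [hind_zero _ _ hmem, mul_zero, zero_mul]
  -- Piece B : the fair-game property at a record time equal to `N`
  have pieceB : ∀ m ∈ Finset.range (T+1),
      E N (fun ω => ind (MN m) ω * Y ω) ≤ᵐ[μ] 0 := by
    intro m hmmem
    set Fm : Ω → ℝ := fun ω => ∑ t ∈ Finset.Icc (Shat γ C m ω + 1) T,
        β ^ t * (h t ω - prevailing γ t ω) with hFm
    have hfairm := hfair m
    rw [← hFm] at hfairm
    have hpt : (fun ω => ind (MN m) ω * Y ω) = fun ω => ind (MN m) ω * Fm ω := by
      funext ω
      by_cases hmem : ω ∈ MN m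
      · have hS : Shat γ C m ω = N := ((hMN_mem m ω).mp hmem).2.1
        simp only [hYdef, hFm]
        rw [hS]
      · rw [hind_zero _ _ hmem, zero_mul, zero_mul]
    rw [hpt]
    refine (hE.posHom N Fm (ind (MN m)) (hind_meas N _ (hMN_meas m))
      (Filter.Eventually.of_forall (hind_nonneg _))).le.trans ?_
    filter_upwards [hfairm] with ω hω
    simp only [Pi.zero_apply] at hω ⊢
    by_cases hmem : ω ∈ MN m
    · have hS : Shat γ C m ω = N := ((hMN_mem m ω).mp hmem).2.1
      rw [hS] at hω
      rw [hω, mul_zero]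
    · rw [hind_zero _ _ hmem, zero_mul]
  -- Piece C : the fair-game property at the record time `N + σ`
  have pieceC : ∀ q ∈ Finset.Icc 1 (T - N) ×ˢ Finset.range (T+1),
      E N (fun ω => ind (Dset q) ω * Y2 ω) ≤ᵐ[μ] 0 := by
    rintro ⟨j, m⟩ hqmem
    rw [Finset.mem_product, Finset.mem_Icc, Finset.mem_range] at hqmem
    have hj1 : 1 ≤ j := hqmem.1.1
    set Fm : Ω → ℝ := fun ω => ∑ t ∈ Finset.Icc (Shat γ C m ω + 1) T,
        β ^ t * (h t ω - prevailing γ t ω) with hFm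
    have hfairm := hfair m
    rw [← hFm] at hfairm
    have hpt : (fun ω => ind (Dset (j, m)) ω * Y2 ω) = fun ω => ind (Dset (j, m)) ω * Fm ω := by
      funext ω
      by_cases hmem : ω ∈ Dset (j, m)
      · obtain ⟨-, hσj, hS, -⟩ := (hD_mem (j, m) ω).mp hmem
        simp only [hY2def, hFm]
        rw [hS, hσj]
      · rw [hind_zero _ _ hmem, zero_mul, zero_mul]
    rw [hpt]
    refine hE.tower_le_zero (Nat.le_add_right N j) ?_
    refine (hE.posHom (N + j) Fm (ind (Dset (j, m))) (hind_meas _ _ (hD_meas j m hj1))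
      (Filter.Eventually.of_forall (hind_nonneg _))).le.trans ?_
    filter_upwards [hfairm] with ω hω
    simp only [Pi.zero_apply] at hω ⊢
    by_cases hmem : ω ∈ Dset (j, m)
    · have hS : Shat γ C m ω = N + j := ((hD_mem (j, m) ω).mp hmem).2.2.1
      rw [hS] at hω
      rw [hω, mul_zero]
    · rw [hind_zero _ _ hmem, zero_mul]
  -- the pointwise decomposition
  have hdecomp : Y = fun ω => (∑ s ∈ Finset.range N, ind (Bset s) ω * Y1 ω)
      + ((∑ m ∈ Finset.range (T+1), ind (MN m) ω * Y ω)
        + (∑ q ∈ Finset.Icc 1 (T - N) ×ˢ Finset.range (T+1), ind (Dset q) ω * Y2 ω)) := by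
    funext ω
    by_cases hBN : ω ∈ Bset N
    · have h1 : ∑ s ∈ Finset.range N, ind (Bset s) ω * Y1 ω = 0 := by
        apply Finset.sum_eq_zero
        intro s hs
        have hsN := Finset.mem_range.mp hs
        have hnot : ω ∉ Bset s := fun hmem => by
          have := huniq ω s N hmem hBN
          omega
        rw [hind_zero _ _ hnot, zero_mul]
      have h3 : ∑ q ∈ Finset.Icc 1 (T - N) ×ˢ Finset.range (T+1),
          ind (Dset q) ω * Y2 ω = 0 := by
        apply Finset.sum_eq_zero
        intro q hq
        have hnot : ω ∉ Dset q := fun hmem => ((hD_mem q ω).mp hmem).1 hBN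
        rw [hind_zero _ _ hnot, zero_mul]
      have hrecN : ∀ θ < N, γ θ ω < γ N ω := by
        intro θ hθ
        have ha := hlam_ub ω θ (by omega)
        have hb := ((hBset_mem N ω).mp hBN).2 θ hθ
        have hc := ((hBset_mem N ω).mp hBN).1
        rw [hc]
        exact lt_of_le_of_ne ha hb
      obtain ⟨m1, hm1, hSm1⟩ := record_reached γ C T hγBdd hγC ω N hrecN
      have hSne : {m : ℕ | Shat γ C m ω = N}.Nonempty := ⟨m1, hSm1⟩
      have hm0mem : Shat γ C (sInf {m : ℕ | Shat γ C m ω = N}) ω = N := Nat.sInf_mem hSne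
      have hm0le : sInf {m : ℕ | Shat γ C m ω = N} ≤ m1 := Nat.sInf_le hSm1
      have hMNmem : ω ∈ MN (sInf {m : ℕ | Shat γ C m ω = N}) := by
        rw [hMN_mem]
        exact ⟨hBN, hm0mem, fun m' hm' hc => Nat.notMem_of_lt_sInf hm' hc⟩
      have h2 : ∑ m ∈ Finset.range (T+1), ind (MN m) ω * Y ω
          = ind (MN (sInf {m : ℕ | Shat γ C m ω = N})) ω * Y ω := by
        apply Finset.sum_eq_single_of_mem _ (Finset.mem_range.mpr (by omega))
        intro b hb hbne
        have hnot : ω ∉ MN b := by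
          intro hmem
          obtain ⟨-, hSb, hminb⟩ := (hMN_mem b ω).mp hmem
          rcases lt_trichotomy b (sInf {m : ℕ | Shat γ C m ω = N}) with hlt | heq | hgt
          · exact Nat.notMem_of_lt_sInf hlt hSb
          · exact hbne heq
          · exact hminb _ hgt hm0mem
        rw [hind_zero _ _ hnot, zero_mul]
      rw [h1, h2, h3, hind_one _ _ hMNmem, one_mul]
      ring
    · have h2 : ∑ m ∈ Finset.range (T+1), ind (MN m) ω * Y ω = 0 := by
        apply Finset.sum_eq_zero
        intro m hm
        have hnot : ω ∉ MN m := fun hmem => hBN ((hMN_mem m ω).mp hmem).1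
        rw [hind_zero _ _ hnot, zero_mul]
      obtain ⟨s0, hs0N, hs0mem⟩ := hcover ω
      have hs0lt : s0 < N := by
        rcases lt_or_eq_of_le hs0N with hlt | heq
        · exact hlt
        · exact absurd (heq ▸ hs0mem) hBN
      have haux1 : ∀ b ∈ Finset.range N, b ≠ s0 → ind (Bset b) ω * Y1 ω = 0 := by
        intro b hb hbne
        have hnot : ω ∉ Bset b := fun hmem => hbne (huniq ω b s0 hmem hs0mem)
        rw [hind_zero _ _ hnot, zero_mul]
      have h1 : ∑ s ∈ Finset.range N, ind (Bset s) ω * Y1 ω = Y1 ω := by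
        rw [Finset.sum_eq_single_of_mem s0 (Finset.mem_range.mpr hs0lt) haux1,
          hind_one _ _ hs0mem, one_mul]
      have hrecσ : ∀ θ < N + σ ω, γ θ ω < γ (N + σ ω) ω := by
        intro θ hθ
        have hub : γ θ ω ≤ lam ω := by
          rcases le_or_gt θ N with hc | hc
          · exact hlam_ub ω θ hc
          · have he : θ = N + (θ - N) := by omega
            rw [he]
            exact hσmin ω (θ - N) (by omega) (by omega)
        exact lt_of_le_of_lt hub (hσlt ω)
      obtain ⟨m1, hm1, hSm1⟩ := record_reached γ C T hγBdd hγC ω (N + σ ω) hrecσ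
      have hm1T : m1 ≤ T := by
        have := hσM ω
        omega
      have hSneσ : {m : ℕ | Shat γ C m ω = N + σ ω}.Nonempty := ⟨m1, hSm1⟩
      have hm0mem : Shat γ C (sInf {m : ℕ | Shat γ C m ω = N + σ ω}) ω = N + σ ω :=
        Nat.sInf_mem hSneσ
      have hm0le : sInf {m : ℕ | Shat γ C m ω = N + σ ω} ≤ m1 := Nat.sInf_le hSm1
      have hDmem : ω ∈ Dset (σ ω, sInf {m : ℕ | Shat γ C m ω = N + σ ω}) := by
        rw [hD_mem]
        exact ⟨hBN, rfl, hm0mem, fun m' hm' hc => Nat.notMem_of_lt_sInf hm' hc⟩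
      have haux3 : ∀ q ∈ Finset.Icc 1 (T - N) ×ˢ Finset.range (T+1),
          q ≠ (σ ω, sInf {m : ℕ | Shat γ C m ω = N + σ ω}) → ind (Dset q) ω * Y2 ω = 0 := by
        rintro ⟨j, m⟩ hq hbne
        have hnot : ω ∉ Dset (j, m) := by
          intro hmem
          obtain ⟨-, hσj, hS, hminm⟩ := (hD_mem (j, m) ω).mp hmem
          have hjσ : j = σ ω := hσj.symm
          subst hjσ
          have hmm : m = sInf {m : ℕ | Shat γ C m ω = N + σ ω} := by
            rcases lt_trichotomy m (sInf {m : ℕ | Shat γ C m ω = N + σ ω}) with hlt | heq | hgt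
            · exact absurd (show m ∈ {m : ℕ | Shat γ C m ω = N + σ ω} from hS)
                (Nat.notMem_of_lt_sInf hlt)
            · exact heq
            · exact absurd hm0mem (hminm _ hgt)
          exact hbne (by rw [hmm])
        rw [hind_zero _ _ hnot, zero_mul]
      have h3 : ∑ q ∈ Finset.Icc 1 (T - N) ×ˢ Finset.range (T+1),
          ind (Dset q) ω * Y2 ω = Y2 ω := by
        rw [Finset.sum_eq_single_of_mem (σ ω, sInf {m : ℕ | Shat γ C m ω = N + σ ω})
          (Finset.mem_product.mpr ⟨Finset.mem_Icc.mpr ⟨hσ1 ω, hσM ω⟩,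
            Finset.mem_range.mpr (by omega)⟩) haux3, hind_one _ _ hDmem, one_mul]
      rw [h1, h2, h3, hY12 ω]
      ring
  -- assemble
  have hG1 : E N (fun ω => ∑ s ∈ Finset.range N, ind (Bset s) ω * Y1 ω) ≤ᵐ[μ] 0 :=
    (hE.sum_le N (Finset.range N) (fun s ω => ind (Bset s) ω * Y1 ω)).trans
      (ConsistentCNE.sum_le_zero_ae _ _ pieceA)
  have hG2 : E N (fun ω => ∑ m ∈ Finset.range (T+1), ind (MN m) ω * Y ω) ≤ᵐ[μ] 0 :=
    (hE.sum_le N (Finset.range (T+1)) (fun m ω => ind (MN m) ω * Y ω)).trans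
      (ConsistentCNE.sum_le_zero_ae _ _ pieceB)
  have hG3 : E N (fun ω => ∑ q ∈ Finset.Icc 1 (T - N) ×ˢ Finset.range (T+1),
      ind (Dset q) ω * Y2 ω) ≤ᵐ[μ] 0 :=
    (hE.sum_le N (Finset.Icc 1 (T - N) ×ˢ Finset.range (T+1))
        (fun q ω => ind (Dset q) ω * Y2 ω)).trans
      (ConsistentCNE.sum_le_zero_ae _ _ pieceC)
  have hrest : E N (fun ω => (∑ m ∈ Finset.range (T+1), ind (MN m) ω * Y ω)
      + (∑ q ∈ Finset.Icc 1 (T - N) ×ˢ Finset.range (T+1), ind (Dset q) ω * Y2 ω))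
      ≤ᵐ[μ] 0 := by
    refine (hE.subadd N _ _).trans ?_
    filter_upwards [hG2, hG3] with ω h2 h3
    simp only [Pi.zero_apply] at h2 h3 ⊢
    linarith
  show E N Y ≤ᵐ[μ] 0
  rw [hdecomp]
  refine (hE.subadd N _ _).trans ?_
  filter_upwards [hG1, hrest] with ω h1 h2
  simp only [Pi.zero_apply] at h1 h2 ⊢
  linarith
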